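/- Let ⟨[0,1], ⊕_p⟩ be a convex algebra satisfying (MO), (UC) and (LC). Then for every nonempty set A and every map φ : A → [0,1], the homomorphic extension φ# : 𝒟A → [0,1], defined by φ#((p_a)_{a∈A}) = ⊕_{a∈A} p_a φ(a), is lower semicontinuous with respect to the topology of pointwise convergence on 𝒟A. -/

import Mathlib

open Set Filter Topology

/-- A convex algebra on the interval `[0,1] ⊆ ℝ`: `op p x y` denotes `x ⊕_p y`,
for `p ∈ (0,1)`, extended to `p ∈ [0,1]` by the projection axioms
`x ⊕_1 y = x` and `x ⊕_0 y = y`.  All axioms are required only on `[0,1]`;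
values of `op` outside `[0,1]` are irrelevant. -/
structure UCA where
  op : ℝ → ℝ → ℝ → ℝ
  mem : ∀ p ∈ Set.Icc (0:ℝ) 1, ∀ x ∈ Set.Icc (0:ℝ) 1, ∀ y ∈ Set.Icc (0:ℝ) 1,
      op p x y ∈ Set.Icc (0:ℝ) 1
  idem : ∀ p ∈ Set.Ioo (0:ℝ) 1, ∀ x ∈ Set.Icc (0:ℝ) 1, op p x x = x
  comm : ∀ p ∈ Set.Ioo (0:ℝ) 1, ∀ x ∈ Set.Icc (0:ℝ) 1, ∀ y ∈ Set.Icc (0:ℝ) 1,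
      op p x y = op (1 - p) y x
  assoc : ∀ p ∈ Set.Ioo (0:ℝ) 1, ∀ q ∈ Set.Ioo (0:ℝ) 1,
      ∀ x ∈ Set.Icc (0:ℝ) 1, ∀ y ∈ Set.Icc (0:ℝ) 1, ∀ z ∈ Set.Icc (0:ℝ) 1,
      op q (op p x y) z = op (p * q) x (op ((1 - p) * q / (1 - p * q)) y z)
  proj1 : ∀ x ∈ Set.Icc (0:ℝ) 1, ∀ y ∈ Set.Icc (0:ℝ) 1, op 1 x y = x
  proj0 : ∀ x ∈ Set.Icc (0:ℝ) 1, ∀ y ∈ Set.Icc (0:ℝ) 1, op 0 x y = y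

/-- Monotonicity (MO): `x ≤ x'` implies `x ⊕_p y ≤ x' ⊕_p y`. -/
def UCA.MO (A : UCA) : Prop :=
  ∀ x ∈ Set.Icc (0:ℝ) 1, ∀ x' ∈ Set.Icc (0:ℝ) 1, ∀ y ∈ Set.Icc (0:ℝ) 1,
    ∀ p ∈ Set.Ioo (0:ℝ) 1, x ≤ x' → A.op p x y ≤ A.op p x' y

/-- (UC): for `x, y ∈ [0,1)` and `p ∈ (0,1)`,
`limsup_{ε→0⁺} ((x+ε) ⊕_p (y+ε)) ≤ x ⊕_p y`. -/
def UCA.UC (A : UCA) : Prop :=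
  ∀ x ∈ Set.Ico (0:ℝ) 1, ∀ y ∈ Set.Ico (0:ℝ) 1, ∀ p ∈ Set.Ioo (0:ℝ) 1,
    Filter.limsup (fun ε => A.op p (x + ε) (y + ε)) (𝓝[>] (0:ℝ)) ≤ A.op p x y

/-- (LC): for `x ≤ y` in `[0,1]`, `liminf_{p→1⁻} (y ⊕_p x) ≥ y`. -/
def UCA.LC (A : UCA) : Prop :=
  ∀ x ∈ Set.Icc (0:ℝ) 1, ∀ y ∈ Set.Icc (0:ℝ) 1, x ≤ y →
    y ≤ Filter.liminf (fun p => A.op p y x) (𝓝[<] (1:ℝ))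

/-- `y ⊳ x` : `y` eats `x`, i.e. `y ⊕_t x = y` for all `t ∈ (0,1]`. -/
def UCA.Eats (A : UCA) (y x : ℝ) : Prop :=
  ∀ t ∈ Set.Ioc (0:ℝ) 1, A.op t y x = y

/-- `E^⊕ = { y ∈ [0,1] : y ⊳ 0 }`. -/
def UCA.E (A : UCA) : Set ℝ := {y ∈ Set.Icc (0:ℝ) 1 | A.Eats y 0}

/-- `V_{x,y} = inf { y ⊕_p x : p ∈ (0,1] }`. -/
noncomputable def UCA.V (A : UCA) (x y : ℝ) : ℝ :=
  sInf ((fun p => A.op p y x) '' Set.Ioc (0:ℝ) 1)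

/-- The convex combination of a finite list of (weight, element) pairs, built
inductively from the binary operations: with `W` the total weight of the list,
`⊕ ((p,x) :: l) = x` if `p = W` (i.e. the normalized first weight is `1`), and
`x ⊕_{p/W} (⊕ l)` otherwise. -/
noncomputable def UCA.mixList (A : UCA) : List (ℝ × ℝ) → ℝ
  | [] => 0
  | (p, x) :: l =>
      if p = p + (l.map Prod.fst).sum then x
      else A.op (p / (p + (l.map Prod.fst).sum)) x (A.mixList l)

open Classical in
/-- The convex combination `⊕_{a∈A} p_a x_a` of a finitely supported family: the
finite convex combination over the support of `(p_a)` (by parametric commutativity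
and associativity it does not depend on the enumeration of the support).
For `p ∈ 𝒟A` and `φ : A → [0,1]`, `A.mixFam p φ` is the homomorphic extension
`φ# : 𝒟A → [0,1]` evaluated at `p`. -/
noncomputable def UCA.mixFam (A : UCA) {α : Type*} (p : α → ℝ) (x : α → ℝ) : ℝ :=
  if h : (Function.support p).Finite then
    A.mixList (h.toFinset.toList.map fun a => (p a, x a))
  else 0

/-- `𝒟A`: the set of finitely supported families `(p_a)_{a∈A}` of nonnegative reals
summing to `1`, viewed inside `ℝ^A` (which carries the product topology, i.e. the
topology of pointwise convergence). -/
def DSet (α : Type*) : Set (α → ℝ) :=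
  {p | (∀ a, 0 ≤ p a) ∧ (Function.support p).Finite ∧ ∑ᶠ a, p a = 1}

namespace CAux

def Wsum (l : List (ℝ × ℝ)) : ℝ := (l.map Prod.fst).sum

def Good (l : List (ℝ × ℝ)) : Prop := ∀ e ∈ l, 0 ≤ e.1 ∧ e.2 ∈ Set.Icc (0:ℝ) 1

@[simp] lemma Wsum_nil : Wsum ([] : List (ℝ × ℝ)) = 0 := rfl

@[simp] lemma Wsum_cons (e : ℝ × ℝ) (l : List (ℝ × ℝ)) : Wsum (e :: l) = e.1 + Wsum l := by
  simp [Wsum]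

@[simp] lemma Wsum_append (l₁ l₂ : List (ℝ × ℝ)) : Wsum (l₁ ++ l₂) = Wsum l₁ + Wsum l₂ := by
  simp [Wsum]

lemma Wsum_nonneg {l : List (ℝ × ℝ)} (h : ∀ e ∈ l, 0 ≤ e.1) : 0 ≤ Wsum l :=
  List.sum_nonneg (by simpa using fun e he => h e he)

lemma Good.tail {e : ℝ × ℝ} {l : List (ℝ × ℝ)} (h : Good (e :: l)) : Good l :=
  fun e' he' => h e' (List.mem_cons_of_mem _ he')

lemma Good.nonneg {l : List (ℝ × ℝ)} (h : Good l) : 0 ≤ Wsum l :=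
  Wsum_nonneg fun e he => (h e he).1

lemma mixList_cons (A : UCA) (p x : ℝ) (l : List (ℝ × ℝ)) :
    A.mixList ((p, x) :: l) =
      if p = p + Wsum l then x else A.op (p / (p + Wsum l)) x (A.mixList l) := rfl

lemma mixList_cons_zero (A : UCA) {l : List (ℝ × ℝ)} (p x : ℝ) (h : Wsum l = 0) :
    A.mixList ((p, x) :: l) = x := by
  rw [mixList_cons, if_pos (by rw [h, add_zero])]

lemma mixList_cons_pos (A : UCA) {l : List (ℝ × ℝ)} (p x : ℝ) (h : Wsum l ≠ 0) :
    A.mixList ((p, x) :: l) = A.op (p / (p + Wsum l)) x (A.mixList l) := by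
  rw [mixList_cons, if_neg (fun hc => h (by linarith))]

lemma ratio_mem {p W : ℝ} (hp : 0 ≤ p) (hW : 0 ≤ W) (h : p + W ≠ 0) :
    p / (p + W) ∈ Set.Icc (0:ℝ) 1 := by
  have hpos : 0 < p + W := lt_of_le_of_ne (by linarith) (Ne.symm h)
  exact ⟨div_nonneg hp hpos.le, (div_le_one hpos).2 (by linarith)⟩

lemma ratio_mem_Ioo {p W : ℝ} (hp : 0 < p) (hW : 0 < W) :
    p / (p + W) ∈ Set.Ioo (0:ℝ) 1 := by
  have hpos : 0 < p + W := by linarith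
  exact ⟨div_pos hp hpos, (div_lt_one hpos).2 (by linarith)⟩

lemma mixList_mem (A : UCA) : ∀ {l : List (ℝ × ℝ)}, Good l → Wsum l ≠ 0 →
    A.mixList l ∈ Set.Icc (0:ℝ) 1 := by
  intro l
  induction l with
  | nil => intro _ h; simp at h
  | cons e l ih =>
    obtain ⟨p, x⟩ := e
    intro hg hW
    obtain ⟨hp, hx⟩ := hg (p, x) (List.mem_cons_self)
    rcases eq_or_ne (Wsum l) 0 with h0 | h0
    · rw [mixList_cons_zero A p x h0]; exact hx
    · have hW' : p + Wsum l ≠ 0 := by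
        have := lt_of_le_of_ne hg.tail.nonneg (Ne.symm h0)
        positivity
      rw [mixList_cons_pos A p x h0]
      exact A.mem _ (ratio_mem hp hg.tail.nonneg hW') _ hx _ (ih hg.tail h0)


lemma op_mono_right (A : UCA) (hMO : A.MO) {t y z z' : ℝ} (ht : t ∈ Set.Ioo (0:ℝ) 1)
    (hy : y ∈ Set.Icc (0:ℝ) 1) (hz : z ∈ Set.Icc (0:ℝ) 1) (hz' : z' ∈ Set.Icc (0:ℝ) 1)
    (h : z ≤ z') : A.op t y z ≤ A.op t y z' := by
  have ht' : 1 - t ∈ Set.Ioo (0:ℝ) 1 := ⟨by linarith [ht.2], by linarith [ht.1]⟩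
  rw [A.comm t ht y hy z hz, A.comm t ht y hy z' hz']
  exact hMO z hz z' hz' y hy (1 - t) ht' h

lemma one_sub_ratio {a b : ℝ} (h : a + b ≠ 0) : 1 - a / (a + b) = b / (a + b) := by
  rw [one_sub_div h]
  ring_nf

lemma mixList_swap (A : UCA) (p q x y : ℝ) (l : List (ℝ × ℝ))
    (hg : Good ((p, x) :: (q, y) :: l)) (hT : Wsum ((p, x) :: (q, y) :: l) ≠ 0) :
    A.mixList ((p, x) :: (q, y) :: l) = A.mixList ((q, y) :: (p, x) :: l) := by
  obtain ⟨hp, hx⟩ : 0 ≤ p ∧ x ∈ Set.Icc (0:ℝ) 1 := hg (p, x) (List.mem_cons_self)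
  obtain ⟨hq, hy⟩ : 0 ≤ q ∧ y ∈ Set.Icc (0:ℝ) 1 :=
    hg (q, y) (List.mem_cons_of_mem _ (List.mem_cons_self))
  have hgl : Good l := hg.tail.tail
  have hW : 0 ≤ Wsum l := hgl.nonneg
  have hTsum : p + (q + Wsum l) ≠ 0 := by simpa using hT
  rcases eq_or_lt_of_le hW with hW0 | hW0
  · -- Wsum l = 0
    have hW0 : Wsum l = 0 := hW0.symm
    have e1 : Wsum ((q, y) :: l) = q := by simp [hW0]
    have e2 : Wsum ((p, x) :: l) = p := by simp [hW0]
    have hpq : p + q ≠ 0 := by intro h; exact hTsum (by rw [hW0]; linarith)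
    rcases eq_or_lt_of_le hp with hp0 | hp0 <;> rcases eq_or_lt_of_le hq with hq0 | hq0
    · exact absurd (by rw [← hp0, ← hq0]; ring) hpq
    · -- p = 0, q > 0
      rw [mixList_cons_pos A (l := (q, y) :: l) p x (by rw [e1]; exact hq0.ne'),
          mixList_cons_zero A (l := l) q y hW0,
          mixList_cons_zero A (l := (p, x) :: l) q y (by rw [e2, ← hp0]),
          e1, ← hp0, zero_div]
      exact A.proj0 x hx y hy
    · -- p > 0, q = 0
      rw [mixList_cons_zero A (l := (q, y) :: l) p x (by rw [e1, ← hq0]),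
          mixList_cons_pos A (l := (p, x) :: l) q y (by rw [e2]; exact hp0.ne'),
          mixList_cons_zero A (l := l) p x hW0,
          e2, ← hq0, zero_div]
      exact (A.proj0 y hy x hx).symm
    · -- p, q > 0
      rw [mixList_cons_pos A (l := (q, y) :: l) p x (by rw [e1]; exact hq0.ne'),
          mixList_cons_pos A (l := (p, x) :: l) q y (by rw [e2]; exact hp0.ne'),
          mixList_cons_zero A (l := l) q y hW0,
          mixList_cons_zero A (l := l) p x hW0, e1, e2]
      rw [A.comm _ (ratio_mem_Ioo hp0 hq0) x hx y hy, one_sub_ratio (by positivity)]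
      rw [add_comm p q]
  · -- Wsum l > 0
    have hz := mixList_mem A hgl hW0.ne'
    have e1 : Wsum ((q, y) :: l) ≠ 0 := by simp only [Wsum_cons]; positivity
    have e2 : Wsum ((p, x) :: l) ≠ 0 := by simp only [Wsum_cons]; positivity
    rw [mixList_cons_pos A (l := (q, y) :: l) p x e1,
        mixList_cons_pos A (l := (p, x) :: l) q y e2,
        mixList_cons_pos A (l := l) q y hW0.ne',
        mixList_cons_pos A (l := l) p x hW0.ne']
    simp only [Wsum_cons]
    set z := A.mixList l with hzdef
    set W := Wsum l with hWdef
    rcases eq_or_lt_of_le hp with hp0 | hp0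
    · -- p = 0
      rw [← hp0, zero_div, zero_div]
      rw [A.proj0 x hx _ (A.mem _ (ratio_mem hq hW (by positivity)) y hy z hz),
          A.proj0 x hx z hz]
      norm_num
    rcases eq_or_lt_of_le hq with hq0 | hq0
    · -- q = 0
      rw [← hq0, zero_div, zero_div]
      rw [A.proj0 y hy _ (A.mem _ (ratio_mem hp hW (by positivity)) x hx z hz),
          A.proj0 y hy z hz]
      norm_num
    · -- p, q > 0
      have hpq : (0:ℝ) < p + q := by linarith
      have hTpos : (0:ℝ) < p + (q + W) := by linarith
      have hqW : (0:ℝ) < q + W := by linarith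
      have hpW : (0:ℝ) < p + W := by linarith
      have hmem1 : p / (p + q) ∈ Set.Ioo (0:ℝ) 1 := ratio_mem_Ioo hp0 hq0
      have hmem1' : q / (p + q) ∈ Set.Ioo (0:ℝ) 1 := by
        have := ratio_mem_Ioo hq0 hp0
        rwa [add_comm q p] at this
      have hmem2 : (p + q) / (p + (q + W)) ∈ Set.Ioo (0:ℝ) 1 := by
        constructor
        · positivity
        · rw [div_lt_one hTpos]; linarith
      have key1 := A.assoc _ hmem1 _ hmem2 x hx y hy z hz
      have key2 := A.assoc _ hmem1' _ hmem2 y hy x hx z hz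
      have c1 : p / (p + q) * ((p + q) / (p + (q + W))) = p / (p + (q + W)) := by
        field_simp
      have c2 : (1 - p / (p + q)) * ((p + q) / (p + (q + W))) /
          (1 - p / (p + q) * ((p + q) / (p + (q + W)))) = q / (q + W) := by
        rw [c1, one_sub_ratio hpq.ne', show p + (q + W) = p + (q + W) from rfl,
            show (1 : ℝ) - p / (p + (q + W)) = (q + W) / (p + (q + W)) by
              rw [one_sub_div hTpos.ne']; ring_nf]
        field_simp
        try ring
      have c1' : q / (p + q) * ((p + q) / (p + (q + W))) = q / (q + (p + W)) := by
        rw [show q + (p + W) = p + (q + W) by ring]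
        field_simp
      have c2' : (1 - q / (p + q)) * ((p + q) / (p + (q + W))) /
          (1 - q / (p + q) * ((p + q) / (p + (q + W)))) = p / (p + W) := by
        rw [show (1:ℝ) - q / (p + q) = p / (p + q) by
              rw [one_sub_div hpq.ne']; ring_nf,
            c1',
            show (1:ℝ) - q / (q + (p + W)) = (p + W) / (q + (p + W)) by
              rw [one_sub_div (by linarith : q + (p + W) ≠ 0)]; ring_nf]
        rw [show q + (p + W) = p + (q + W) by ring]
        field_simp
        try ring
      rw [c2, c1] at key1
      rw [c2', c1'] at key2
      rw [← key1, ← key2, A.comm _ hmem1 x hx y hy, one_sub_ratio hpq.ne']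

lemma mixList_perm (A : UCA) {l₁ l₂ : List (ℝ × ℝ)} (h : l₁.Perm l₂) :
    Good l₁ → Wsum l₁ ≠ 0 → A.mixList l₁ = A.mixList l₂ := by
  induction h with
  | nil => intro _ h; simp at h
  | @cons e l₁ l₂ h ih =>
    obtain ⟨p, x⟩ := e
    intro hg hW
    have hWeq : Wsum l₁ = Wsum l₂ := List.Perm.sum_eq (h.map Prod.fst)
    rcases eq_or_ne (Wsum l₁) 0 with h0 | h0
    · rw [mixList_cons_zero A (l := l₁) p x h0,
        mixList_cons_zero A (l := l₂) p x (hWeq ▸ h0)]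
    · rw [mixList_cons_pos A (l := l₁) p x h0,
        mixList_cons_pos A (l := l₂) p x (hWeq ▸ h0), ← hWeq, ih hg.tail h0]
  | swap e₁ e₂ l =>
    intro hg hW
    exact mixList_swap A _ _ _ _ l hg hW
  | @trans l₁ l₂ l₃ h₁ h₂ ih₁ ih₂ =>
    intro hg hW
    have hg₂ : Good l₂ := fun e he => hg e (h₁.mem_iff.2 he)
    have hW₂ : Wsum l₂ ≠ 0 := by
      rw [show Wsum l₁ = Wsum l₂ from List.Perm.sum_eq (h₁.map Prod.fst)] at hW
      exact hW
    exact (ih₁ hg hW).trans (ih₂ hg₂ hW₂)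

lemma Wsum_filter : ∀ (l : List (ℝ × ℝ)),
    Wsum (l.filter fun e => e.1 ≠ 0) = Wsum l
  | [] => rfl
  | e :: l => by
    by_cases he : e.1 = 0
    · rw [List.filter_cons_of_neg (by simp [he]), Wsum_cons, he, zero_add, Wsum_filter l]
    · rw [List.filter_cons_of_pos (by simp [he]), Wsum_cons, Wsum_cons, Wsum_filter l]

lemma mixList_filter (A : UCA) : ∀ {l : List (ℝ × ℝ)}, Good l → Wsum l ≠ 0 →
    A.mixList (l.filter fun e => e.1 ≠ 0) = A.mixList l := by
  intro l
  induction l with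
  | nil => intro _ h; simp at h
  | cons e l ih =>
    obtain ⟨p, x⟩ := e
    intro hg hW
    obtain ⟨hp, hx⟩ : 0 ≤ p ∧ x ∈ Set.Icc (0:ℝ) 1 := hg (p, x) (List.mem_cons_self)
    by_cases hp0 : p = 0
    · subst hp0
      have hl : Wsum l ≠ 0 := by simpa using hW
      rw [List.filter_cons_of_neg (by simp),
        mixList_cons_pos A (l := l) 0 x hl, zero_div,
        A.proj0 x hx _ (mixList_mem A hg.tail hl)]
      exact ih hg.tail hl
    · rw [show (((p, x) :: l).filter fun e => e.1 ≠ 0) = (p, x) :: (l.filter fun e => e.1 ≠ 0) by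
        simp [List.filter_cons, hp0]]
      rcases eq_or_ne (Wsum l) 0 with h0 | h0
      · rw [mixList_cons_zero A (l := l) p x h0,
          mixList_cons_zero A (l := l.filter fun e => e.1 ≠ 0) p x (by rw [Wsum_filter, h0])]
      · rw [mixList_cons_pos A (l := l) p x h0,
          mixList_cons_pos A (l := l.filter fun e => e.1 ≠ 0) p x (by rw [Wsum_filter]; exact h0),
          Wsum_filter, ih hg.tail h0]

lemma sum_zero_all_zero : ∀ {l : List (ℝ × ℝ)}, (∀ e ∈ l, 0 ≤ e.1) → Wsum l = 0 →
    ∀ e ∈ l, e.1 = 0 := by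
  intro l
  induction l with
  | nil => intro _ _ e he; simp at he
  | cons e l ih =>
    intro hnn hW f hf
    have h1 : 0 ≤ e.1 := hnn e (List.mem_cons_self)
    have h2 : 0 ≤ Wsum l := Wsum_nonneg fun e' he' => hnn e' (List.mem_cons_of_mem _ he')
    rw [Wsum_cons] at hW
    have he1 : e.1 = 0 := by linarith
    have hl : Wsum l = 0 := by linarith
    rcases List.mem_cons.1 hf with rfl | hf'
    · exact he1
    · exact ih (fun e' he' => hnn e' (List.mem_cons_of_mem _ he')) hl f hf'

lemma Good.append_left {l₁ l₂ : List (ℝ × ℝ)} (h₁ : Good l₁) (h₂ : Good l₂) :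
    Good (l₁ ++ l₂) := fun e he => by
  rcases List.mem_append.1 he with h | h
  · exact h₁ e h
  · exact h₂ e h

lemma mixList_append (A : UCA) : ∀ {l₁ l₂ : List (ℝ × ℝ)}, Good l₁ → Good l₂ →
    Wsum l₁ ≠ 0 → Wsum l₂ ≠ 0 →
    A.mixList (l₁ ++ l₂) =
      A.op (Wsum l₁ / (Wsum l₁ + Wsum l₂)) (A.mixList l₁) (A.mixList l₂) := by
  intro l₁
  induction l₁ with
  | nil => intro l₂ _ _ h _; simp at h
  | cons e l₁ ih =>
    obtain ⟨p, x⟩ := e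
    intro l₂ hg₁ hg₂ hW₁ hW₂
    obtain ⟨hp, hx⟩ : 0 ≤ p ∧ x ∈ Set.Icc (0:ℝ) 1 := hg₁ (p, x) (List.mem_cons_self)
    have hA : 0 ≤ Wsum l₁ := hg₁.tail.nonneg
    have hB : 0 < Wsum l₂ := lt_of_le_of_ne hg₂.nonneg (Ne.symm hW₂)
    have hz₂ := mixList_mem A hg₂ hW₂
    rcases eq_or_lt_of_le hA with hA0 | hA0
    · -- Wsum l₁ = 0, so p > 0
      have hA0 : Wsum l₁ = 0 := hA0.symm
      have hp0 : 0 < p := by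
        rcases eq_or_lt_of_le hp with h | h
        · exact absurd (by rw [Wsum_cons, ← h, hA0]; ring) hW₁
        · exact h
      have hfilter : A.mixList (l₁ ++ l₂) = A.mixList l₂ := by
        have hall : ∀ e ∈ l₁, e.1 = 0 :=
          sum_zero_all_zero (fun e he => (hg₁.tail e he).1) hA0
        have h1 : (l₁ ++ l₂).filter (fun e => e.1 ≠ 0) = l₂.filter (fun e => e.1 ≠ 0) := by
          rw [List.filter_append, List.filter_eq_nil_iff.2 (by simpa using fun a b hab => hall (a, b) hab), List.nil_append]
        rw [← mixList_filter A (hg₁.tail.append_left hg₂) (by rw [Wsum_append, hA0, zero_add]; exact hW₂),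
          h1, mixList_filter A hg₂ hW₂]
      rw [show ((p, x) :: l₁) ++ l₂ = (p, x) :: (l₁ ++ l₂) from rfl,
        mixList_cons_pos A (l := l₁ ++ l₂) p x (by rw [Wsum_append, hA0, zero_add]; exact hW₂),
        hfilter, mixList_cons_zero A (l := l₁) p x hA0,
        Wsum_append, hA0, Wsum_cons, hA0]
      norm_num
    · -- Wsum l₁ > 0
      have hY := mixList_mem A hg₁.tail hA0.ne'
      have hkey := ih hg₁.tail hg₂ hA0.ne' hW₂
      rw [show ((p, x) :: l₁) ++ l₂ = (p, x) :: (l₁ ++ l₂) from rfl,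
        mixList_cons_pos A (l := l₁ ++ l₂) p x (by rw [Wsum_append]; positivity),
        mixList_cons_pos A (l := l₁) p x hA0.ne', hkey, Wsum_append, Wsum_cons]
      set Y := A.mixList l₁
      set Z := A.mixList l₂
      set W1 := Wsum l₁
      set W2 := Wsum l₂
      rcases eq_or_lt_of_le hp with hp0 | hp0
      · -- p = 0
        rw [← hp0, zero_div, zero_div, zero_add,
          A.proj0 x hx _ (A.mem _ (ratio_mem hA0.le hB.le (by positivity)) Y hY Z hz₂),
          A.proj0 x hx Y hY]
      · -- p > 0
        have hT : (0:ℝ) < p + (W1 + W2) := by positivity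
        have hpW1 : (0:ℝ) < p + W1 := by positivity
        have hm1 : p / (p + W1) ∈ Set.Ioo (0:ℝ) 1 := ratio_mem_Ioo hp0 hA0
        have hm2 : (p + W1) / (p + (W1 + W2)) ∈ Set.Ioo (0:ℝ) 1 := by
          constructor
          · positivity
          · rw [div_lt_one hT]; linarith
        have key := A.assoc _ hm1 _ hm2 x hx Y hY Z hz₂
        have c1 : p / (p + W1) * ((p + W1) / (p + (W1 + W2))) = p / (p + (W1 + W2)) := by
          field_simp
        have c2 : (1 - p / (p + W1)) * ((p + W1) / (p + (W1 + W2))) /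
            (1 - p / (p + W1) * ((p + W1) / (p + (W1 + W2)))) = W1 / (W1 + W2) := by
          rw [one_sub_ratio hpW1.ne', c1,
            show (1:ℝ) - p / (p + (W1 + W2)) = (W1 + W2) / (p + (W1 + W2)) by
              rw [one_sub_div hT.ne']; ring_nf]
          field_simp
          try ring
        rw [c2, c1] at key
        rw [← key]
        norm_num [add_assoc]

/-- Pointwise sum of weights of two lists with the same values. -/
def combine : List (ℝ × ℝ) → List (ℝ × ℝ) → List (ℝ × ℝ) :=
  List.zipWith (fun a b => (a.1 + b.1, a.2))

@[simp] lemma combine_nil : combine [] [] = [] := rfl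

@[simp] lemma combine_cons (a b : ℝ × ℝ) (u v : List (ℝ × ℝ)) :
    combine (a :: u) (b :: v) = (a.1 + b.1, a.2) :: combine u v := rfl

lemma Wsum_combine : ∀ {u v : List (ℝ × ℝ)}, u.length = v.length →
    Wsum (combine u v) = Wsum u + Wsum v := by
  intro u
  induction u with
  | nil =>
    intro v hv
    rw [List.length_nil] at hv
    rw [(List.length_eq_zero_iff.1 hv.symm : v = [])]
    simp
  | cons a u ih =>
    intro v hv
    match v with
    | [] => simp at hv
    | b :: v =>
      simp only [List.length_cons, Nat.add_right_cancel_iff] at hv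
      rw [combine_cons, Wsum_cons, Wsum_cons, Wsum_cons, ih hv]
      ring

lemma mixList_combine (A : UCA) : ∀ {u v : List (ℝ × ℝ)}, Good u → Good v →
    u.map Prod.snd = v.map Prod.snd → Wsum u + Wsum v ≠ 0 →
    A.mixList (combine u v) = A.mixList (u ++ v) := by
  intro u
  induction u with
  | nil =>
    intro v _ _ hsnd hW
    rw [(List.map_eq_nil_iff.1 hsnd.symm : v = [])] at hW ⊢
    simp at hW
  | cons a u ih =>
    intro v hgu hgv hsnd hW
    match v with
    | [] => simp at hsnd
    | b :: v =>
      obtain ⟨a1, x⟩ := a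
      obtain ⟨b1, y⟩ := b
      simp only [List.map_cons, List.cons.injEq] at hsnd
      obtain ⟨hxy, hsnd⟩ := hsnd
      subst hxy
      obtain ⟨ha1, hx⟩ : 0 ≤ a1 ∧ x ∈ Set.Icc (0:ℝ) 1 := hgu (a1, x) (List.mem_cons_self)
      obtain ⟨hb1, -⟩ : 0 ≤ b1 ∧ x ∈ Set.Icc (0:ℝ) 1 := hgv (b1, x) (List.mem_cons_self)
      have hlen : u.length = v.length := by
        have := congrArg List.length hsnd
        simpa using this
      have hA : 0 ≤ Wsum u := hgu.tail.nonneg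
      have hB : 0 ≤ Wsum v := hgv.tail.nonneg
      have hguv : Good (u ++ v) := hgu.tail.append_left hgv.tail
      -- right side: reorganize to (a1,x) :: (b1,x) :: (u ++ v)
      have hperm : ((a1, x) :: u ++ (b1, x) :: v).Perm ((a1, x) :: (b1, x) :: (u ++ v)) :=
        List.Perm.cons _ List.perm_middle
      have hWT : Wsum ((a1, x) :: u ++ (b1, x) :: v) ≠ 0 := by
        simp only [Wsum_append, Wsum_cons] at hW ⊢
        intro hc; exact hW (by linarith)
      have hgT : Good ((a1, x) :: u ++ (b1, x) :: v) :=
        hgu.append_left hgv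
      have hR : A.mixList ((a1, x) :: u ++ (b1, x) :: v) =
          A.mixList ((a1, x) :: (b1, x) :: (u ++ v)) :=
        mixList_perm A hperm hgT hWT
      rw [hR, combine_cons]
      simp only [Wsum_append, Wsum_cons] at hW
      rcases eq_or_lt_of_le (by linarith : (0:ℝ) ≤ Wsum u + Wsum v) with hC | hC
      · -- Wsum u + Wsum v = 0
        have hC : Wsum u + Wsum v = 0 := hC.symm
        have hu0 : Wsum u = 0 := by linarith
        have hv0 : Wsum v = 0 := by linarith
        have hcomb0 : Wsum (combine u v) = 0 := by rw [Wsum_combine hlen, hu0, hv0]; ring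
        have huv0 : Wsum (u ++ v) = 0 := by rw [Wsum_append, hu0, hv0]; ring
        rw [mixList_cons_zero A (l := combine u v) (a1 + b1) x hcomb0]
        rcases eq_or_lt_of_le hb1 with hb0 | hb0
        · rw [mixList_cons_zero A (l := (b1, x) :: (u ++ v)) a1 x
            (by rw [Wsum_cons, huv0, ← hb0]; ring)]
        · have hWb : Wsum ((b1, x) :: (u ++ v)) ≠ 0 := by
            rw [Wsum_cons, huv0, add_zero]; exact hb0.ne'
          rw [mixList_cons_pos A (l := (b1, x) :: (u ++ v)) a1 x hWb,
            mixList_cons_zero A (l := u ++ v) b1 x huv0,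
            Wsum_cons, huv0, add_zero]
          rcases eq_or_lt_of_le ha1 with ha0 | ha0
          · rw [← ha0, zero_div]
            exact (A.proj0 x hx x hx).symm
          · exact (A.idem _ (ratio_mem_Ioo ha0 hb0) x hx).symm
      · -- Wsum u + Wsum v > 0
        have hz : A.mixList (u ++ v) ∈ Set.Icc (0:ℝ) 1 :=
          mixList_mem A hguv (by rw [Wsum_append]; exact hC.ne')
        have hcz : A.mixList (combine u v) = A.mixList (u ++ v) :=
          ih hgu.tail hgv.tail hsnd hC.ne'
        rw [mixList_cons_pos A (l := combine u v) (a1 + b1) x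
            (by rw [Wsum_combine hlen]; exact hC.ne'),
          Wsum_combine hlen, hcz,
          mixList_cons_pos A (l := (b1, x) :: (u ++ v)) a1 x
            (by rw [Wsum_cons, Wsum_append]; intro hc; exact hC.ne' (by linarith)),
          mixList_cons_pos A (l := u ++ v) b1 x
            (by rw [Wsum_append]; exact hC.ne'),
          Wsum_cons, Wsum_append]
        set C := Wsum u + Wsum v with hCdef
        set z := A.mixList (u ++ v) with hzdef
        rcases eq_or_lt_of_le ha1 with ha0 | ha0
        · -- a1 = 0
          rw [← ha0, zero_div, zero_add,
            A.proj0 x hx _ (A.mem _ (ratio_mem hb1 hC.le (by positivity)) x hx z hz)]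
        rcases eq_or_lt_of_le hb1 with hb0 | hb0
        · -- b1 = 0
          rw [← hb0, zero_div, add_zero, A.proj0 x hx z hz]
          norm_num
        · -- a1, b1 > 0
          have hab : (0:ℝ) < a1 + b1 := by linarith
          have hT : (0:ℝ) < a1 + b1 + C := by linarith
          have hm1 : a1 / (a1 + b1) ∈ Set.Ioo (0:ℝ) 1 := ratio_mem_Ioo ha0 hb0
          have hm2 : (a1 + b1) / (a1 + b1 + C) ∈ Set.Ioo (0:ℝ) 1 := by
            constructor
            · positivity
            · rw [div_lt_one hT]; linarith
          have key := A.assoc _ hm1 _ hm2 x hx x hx z hz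
          have c1 : a1 / (a1 + b1) * ((a1 + b1) / (a1 + b1 + C)) = a1 / (a1 + (b1 + C)) := by
            rw [show a1 + (b1 + C) = a1 + b1 + C by ring]
            field_simp
          have c2 : (1 - a1 / (a1 + b1)) * ((a1 + b1) / (a1 + b1 + C)) /
              (1 - a1 / (a1 + b1) * ((a1 + b1) / (a1 + b1 + C))) = b1 / (b1 + C) := by
            rw [one_sub_ratio hab.ne', c1,
              show (1:ℝ) - a1 / (a1 + (b1 + C)) = (b1 + C) / (a1 + (b1 + C)) by
                rw [one_sub_div (by linarith : a1 + (b1 + C) ≠ 0)]; ring_nf,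
              show a1 + (b1 + C) = a1 + b1 + C by ring]
            field_simp
            try ring
          rw [c2, c1, A.idem _ hm1 x hx] at key
          rw [← key]

lemma mixList_scale (A : UCA) (c : ℝ) (hc : c ≠ 0) :
    ∀ (l : List (ℝ × ℝ)), A.mixList (l.map fun e => (c * e.1, e.2)) = A.mixList l
  | [] => rfl
  | (p, x) :: l => by
    have hWs : Wsum (l.map fun e => (c * e.1, e.2)) = c * Wsum l := by
      rw [Wsum, List.map_map]
      exact (List.sum_map_mul_left l Prod.fst c : _)
    rcases eq_or_ne (Wsum l) 0 with h0 | h0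
    · rw [List.map_cons, mixList_cons_zero A (c * p) x (by rw [hWs, h0, mul_zero]),
        mixList_cons_zero A p x h0]
    · rw [List.map_cons, mixList_cons_pos A (c * p) x (by rw [hWs]; exact mul_ne_zero hc h0),
        mixList_cons_pos A p x h0, hWs, ← mul_add, mul_div_mul_left _ _ hc,
        mixList_scale A c hc l]

lemma good_map {α : Type*} (w v : α → ℝ) (hw : ∀ a, 0 ≤ w a)
    (hv : ∀ a, v a ∈ Set.Icc (0:ℝ) 1) (l : List α) :
    Good (l.map fun a => (w a, v a)) := by
  intro e he
  simp only [List.mem_map] at he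
  obtain ⟨a, -, rfl⟩ := he
  exact ⟨hw a, hv a⟩

lemma Wsum_map_toList {α : Type*} (w v : α → ℝ) (T : Finset α) :
    Wsum (T.toList.map fun a => (w a, v a)) = ∑ a ∈ T, w a := by
  rw [Wsum, List.map_map]
  exact Finset.sum_map_toList T w

lemma mixList_toList_eq (A : UCA) {α : Type*} (p x : α → ℝ) (hnn : ∀ a, 0 ≤ p a)
    (hx : ∀ a, x a ∈ Set.Icc (0:ℝ) 1) {T₁ T₂ : Finset α}
    (h₁ : ∀ a, p a ≠ 0 → a ∈ T₁) (h₂ : ∀ a, p a ≠ 0 → a ∈ T₂)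
    (hsum : ∑ a ∈ T₁, p a ≠ 0) :
    A.mixList (T₁.toList.map fun a => (p a, x a)) =
      A.mixList (T₂.toList.map fun a => (p a, x a)) := by
  classical
  have hf : ∀ (T : Finset α),
      ((T.toList.map fun a => (p a, x a)).filter fun e => e.1 ≠ 0) =
        ((T.toList.filter fun a => p a ≠ 0).map fun a => (p a, x a)) := by
    intro T
    exact List.filter_map
  have hsum2 : ∑ a ∈ T₂, p a ≠ 0 := by
    have hTT : T₁.filter (fun a => p a ≠ 0) = T₂.filter (fun a => p a ≠ 0) := by
      ext a
      simp only [Finset.mem_filter]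
      constructor
      · rintro ⟨-, h⟩; exact ⟨h₂ a h, h⟩
      · rintro ⟨-, h⟩; exact ⟨h₁ a h, h⟩
    rwa [← Finset.sum_filter_ne_zero, hTT, Finset.sum_filter_ne_zero] at hsum
  have hmem : ∀ a, a ∈ (T₁.toList.filter fun a => p a ≠ 0) ↔
      a ∈ (T₂.toList.filter fun a => p a ≠ 0) := by
    intro a
    simp only [List.mem_filter, Finset.mem_toList, decide_eq_true_eq]
    constructor
    · rintro ⟨-, h⟩; exact ⟨h₂ a h, h⟩
    · rintro ⟨-, h⟩; exact ⟨h₁ a h, h⟩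
  have hperm : ((T₁.toList.filter fun a => p a ≠ 0)).Perm
      ((T₂.toList.filter fun a => p a ≠ 0)) :=
    (List.perm_ext_iff_of_nodup (T₁.nodup_toList.filter _) (T₂.nodup_toList.filter _)).2 hmem
  have g₁ := good_map p x hnn hx T₁.toList
  have g₂ := good_map p x hnn hx T₂.toList
  have W₁ : Wsum (T₁.toList.map fun a => (p a, x a)) ≠ 0 := by
    rw [Wsum_map_toList]; exact hsum
  have W₂ : Wsum (T₂.toList.map fun a => (p a, x a)) ≠ 0 := by
    rw [Wsum_map_toList]; exact hsum2
  calc A.mixList (T₁.toList.map fun a => (p a, x a))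
      = A.mixList ((T₁.toList.map fun a => (p a, x a)).filter fun e => e.1 ≠ 0) :=
        (mixList_filter A g₁ W₁).symm
    _ = A.mixList ((T₂.toList.map fun a => (p a, x a)).filter fun e => e.1 ≠ 0) := by
        rw [hf T₁, hf T₂]
        refine mixList_perm A (hperm.map _) ?_ ?_
        · exact good_map p x hnn hx _
        · rw [← hf T₁, Wsum_filter, Wsum_map_toList]; exact hsum
    _ = A.mixList (T₂.toList.map fun a => (p a, x a)) := mixList_filter A g₂ W₂

lemma mixFam_eq (A : UCA) {α : Type*} (p x : α → ℝ) (hfin : (Function.support p).Finite)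
    (hnn : ∀ a, 0 ≤ p a) (hx : ∀ a, x a ∈ Set.Icc (0:ℝ) 1) (hsum : ∑ᶠ a, p a ≠ 0)
    (T : Finset α) (hT : ∀ a, p a ≠ 0 → a ∈ T) :
    A.mixFam p x = A.mixList (T.toList.map fun a => (p a, x a)) := by
  have hsupp : Function.support p ⊆ ↑hfin.toFinset := by simp
  have hsum' : ∑ a ∈ hfin.toFinset, p a ≠ 0 := by
    rw [← finsum_eq_sum_of_support_subset p hsupp]
    exact hsum
  rw [UCA.mixFam, dif_pos hfin]
  exact mixList_toList_eq A p x hnn hx (fun a ha => hfin.mem_toFinset.2 ha) hT hsum'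

lemma combine_map {α : Type*} (f g : α → ℝ × ℝ) :
    ∀ (l : List α), combine (l.map f) (l.map g) =
      l.map (fun a => ((f a).1 + (g a).1, (f a).2))
  | [] => rfl
  | a :: l => by
    rw [List.map_cons, List.map_cons, List.map_cons, combine_cons, combine_map f g l]

end CAux

open CAux in
theorem stmt_19' {α : Type*} [Nonempty α] (A : UCA)
    (hMO : A.MO) (hLC : A.LC)
    (φ : α → ℝ) (hφ : ∀ a, φ a ∈ Set.Icc (0:ℝ) 1) :
    LowerSemicontinuousOn (fun p => A.mixFam p φ) (DSet α) := by
  classical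
  intro q hq γ hγ
  obtain ⟨hq0, hqfin, hqsum⟩ := hq
  set y₀ := A.mixFam q φ with hy₀def
  have hγ' : γ < y₀ := hγ
  have hqsum' : ∑ᶠ a, q a ≠ 0 := by rw [hqsum]; exact one_ne_zero
  have hy₀ : y₀ ∈ Set.Icc (0:ℝ) 1 := by
    rw [hy₀def, mixFam_eq A q φ hqfin hq0 hφ hqsum' hqfin.toFinset
      (fun a ha => hqfin.mem_toFinset.2 ha)]
    refine mixList_mem A (good_map q φ hq0 hφ _) ?_
    rw [Wsum_map_toList, ← finsum_eq_sum_of_support_subset q (by simp), hqsum]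
    exact one_ne_zero
  have hlim : y₀ ≤ Filter.liminf (fun t => A.op t y₀ 0) (𝓝[<] (1:ℝ)) :=
    hLC 0 ⟨le_refl 0, zero_le_one⟩ y₀ hy₀ hy₀.1
  have hbdd : Filter.IsBoundedUnder (· ≥ ·) (𝓝[<] (1:ℝ)) (fun t => A.op t y₀ 0) := by
    refine ⟨0, ?_⟩
    rw [Filter.eventually_map]
    filter_upwards [Ioo_mem_nhdsLT (by norm_num : (1:ℝ)/2 < 1)] with t ht
    exact (A.mem t ⟨by linarith [ht.1], ht.2.le⟩ y₀ hy₀ 0 ⟨le_refl 0, zero_le_one⟩).1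
  have hev1 : ∀ᶠ t in 𝓝[<] (1:ℝ), γ < A.op t y₀ 0 :=
    Filter.eventually_lt_of_lt_liminf (lt_of_lt_of_le hγ' hlim) hbdd
  have hev2 : ∀ᶠ t in 𝓝[<] (1:ℝ), t ∈ Set.Ioo ((1:ℝ)/2) 1 :=
    Ioo_mem_nhdsLT (by norm_num)
  obtain ⟨t, htγ, ht⟩ := (hev1.and hev2).exists
  set δ := 1 - t with hδdef
  have hδ0 : 0 < δ := by rw [hδdef]; linarith [ht.2]
  have hδ1 : δ < 1 := by rw [hδdef]; linarith [ht.1]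
  have h1δ : 1 - δ = t := by rw [hδdef]; ring
  have hSne : hqfin.toFinset.Nonempty := by
    rcases Finset.eq_empty_or_nonempty hqfin.toFinset with h | h
    · exfalso
      have hz : ∀ a, q a = 0 := by
        intro a; by_contra ha
        have h2 := hqfin.mem_toFinset.2 ha
        rw [h] at h2; simp at h2
      rw [show q = (fun _ => (0:ℝ)) from funext hz] at hqsum
      simp at hqsum
    · exact h
  set S := hqfin.toFinset with hSdef
  set m := S.inf' hSne q with hmdef
  have hm0 : 0 < m := by
    rw [hmdef, Finset.lt_inf'_iff]
    intro a ha
    have h2 : q a ≠ 0 := by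
      rw [hSdef, Set.Finite.mem_toFinset] at ha
      exact ha
    exact lt_of_le_of_ne (hq0 a) (Ne.symm h2)
  set ε := δ * m with hεdef
  have hε0 : 0 < ε := mul_pos hδ0 hm0
  have hev : ∀ᶠ p in 𝓝 q, ∀ a ∈ S, |p a - q a| < ε := by
    rw [Finset.eventually_all]
    intro a _
    have hcont : Filter.Tendsto (fun p : α → ℝ => p a) (𝓝 q) (𝓝 (q a)) :=
      (continuous_apply a).tendsto q
    have h2 := hcont (Metric.ball_mem_nhds (q a) hε0)
    rw [Filter.mem_map] at h2
    filter_upwards [h2] with p hp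
    simpa [Real.dist_eq] using hp
  filter_upwards [hev.filter_mono nhdsWithin_le_nhds, self_mem_nhdsWithin] with p hpS hpD
  show γ < A.mixFam p φ
  obtain ⟨hp0, hpfin, hpsum⟩ := hpD
  have hpsum' : ∑ᶠ a, p a ≠ 0 := by rw [hpsum]; exact one_ne_zero
  set r : α → ℝ := fun a => (p a - (1 - δ) * q a) / δ with hrdef
  have hr0 : ∀ a, 0 ≤ r a := by
    intro a
    rw [hrdef]
    by_cases hqa : q a = 0
    · simp only [hqa, mul_zero, sub_zero]
      exact div_nonneg (hp0 a) hδ0.le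
    · have haS : a ∈ S := by rw [hSdef, Set.Finite.mem_toFinset]; exact hqa
      have h1 := hpS a haS
      have h2 : m ≤ q a := by rw [hmdef]; exact Finset.inf'_le q haS
      have h3 := abs_lt.1 h1
      rw [hεdef] at h3
      have h4 : δ * m ≤ δ * q a := mul_le_mul_of_nonneg_left h2 hδ0.le
      apply div_nonneg _ hδ0.le
      rw [show p a - (1 - δ) * q a = (p a - q a) + δ * q a by ring]
      linarith [h3.1]
  have hrsupp : ∀ a, r a ≠ 0 → p a ≠ 0 ∨ q a ≠ 0 := by
    intro a ha
    by_contra hc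
    push_neg at hc
    apply ha
    simp [hrdef, hc.1, hc.2]
  have hrfin : (Function.support r).Finite := by
    apply (hpfin.union hqfin).subset
    intro a ha
    exact hrsupp a (Function.mem_support.1 ha)
  set T := hpfin.toFinset ∪ S with hTdef
  have hpT : ∀ a, p a ≠ 0 → a ∈ T := fun a ha =>
    Finset.mem_union_left _ (hpfin.mem_toFinset.2 ha)
  have hqT : ∀ a, q a ≠ 0 → a ∈ T := fun a ha =>
    Finset.mem_union_right _ (by rw [hSdef, Set.Finite.mem_toFinset]; exact ha)
  have hrT : ∀ a, r a ≠ 0 → a ∈ T := by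
    intro a ha
    rcases hrsupp a ha with h | h
    exacts [hpT a h, hqT a h]
  have hsumpT : ∑ a ∈ T, p a = 1 := by
    rw [← finsum_eq_sum_of_support_subset p
      (fun a ha => Finset.mem_coe.2 (hpT a (Function.mem_support.1 ha)))]
    exact hpsum
  have hsumqT : ∑ a ∈ T, q a = 1 := by
    rw [← finsum_eq_sum_of_support_subset q
      (fun a ha => Finset.mem_coe.2 (hqT a (Function.mem_support.1 ha)))]
    exact hqsum
  have hsumrT : ∑ a ∈ T, r a = 1 := by
    rw [show (∑ a ∈ T, r a) = ∑ a ∈ T, (p a - (1 - δ) * q a) / δ from rfl,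
      ← Finset.sum_div, Finset.sum_sub_distrib, ← Finset.mul_sum, hsumpT, hsumqT]
    field_simp
    ring
  have hrsum : ∑ᶠ a, r a = 1 := by
    rw [finsum_eq_sum_of_support_subset r
      (fun a ha => Finset.mem_coe.2 (hrT a (Function.mem_support.1 ha)))]
    exact hsumrT
  have hzeq : A.mixFam r φ = A.mixList (T.toList.map fun a => (r a, φ a)) :=
    mixFam_eq A r φ hrfin hr0 hφ (by rw [hrsum]; exact one_ne_zero) T hrT
  have hz : A.mixFam r φ ∈ Set.Icc (0:ℝ) 1 := by
    rw [hzeq]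
    exact mixList_mem A (good_map r φ hr0 hφ _)
      (by rw [Wsum_map_toList, hsumrT]; exact one_ne_zero)
  have hcomb : ∀ a, (1 - δ) * q a + δ * r a = p a := by
    intro a
    rw [hrdef]
    field_simp
    ring
  have hLp : A.mixFam p φ = A.mixList (T.toList.map fun a => (p a, φ a)) :=
    mixFam_eq A p φ hpfin hp0 hφ hpsum' T hpT
  have hcombList : combine (T.toList.map fun a => ((1 - δ) * q a, φ a))
      (T.toList.map fun a => (δ * r a, φ a)) = T.toList.map fun a => (p a, φ a) := by
    rw [combine_map]
    refine congrArg (fun f => List.map f T.toList) (funext fun a => ?_)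
    show ((1 - δ) * q a + δ * r a, φ a) = (p a, φ a)
    rw [hcomb a]
  have hWu : Wsum (T.toList.map fun a => ((1 - δ) * q a, φ a)) = 1 - δ := by
    rw [Wsum_map_toList, ← Finset.mul_sum, hsumqT, mul_one]
  have hWv : Wsum (T.toList.map fun a => (δ * r a, φ a)) = δ := by
    rw [Wsum_map_toList, ← Finset.mul_sum, hsumrT, mul_one]
  have hgu : Good (T.toList.map fun a => ((1 - δ) * q a, φ a)) :=
    good_map _ φ (fun a => mul_nonneg (by linarith) (hq0 a)) hφ _
  have hgv : Good (T.toList.map fun a => (δ * r a, φ a)) :=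
    good_map _ φ (fun a => mul_nonneg hδ0.le (hr0 a)) hφ _
  have hsnd : (T.toList.map fun a => ((1 - δ) * q a, φ a)).map Prod.snd =
      (T.toList.map fun a => (δ * r a, φ a)).map Prod.snd := by
    simp [List.map_map]
  have key : A.mixFam p φ = A.op (1 - δ) y₀ (A.mixFam r φ) := by
    rw [hLp, ← hcombList,
      mixList_combine A hgu hgv hsnd (by rw [hWu, hWv]; norm_num),
      mixList_append A hgu hgv (by rw [hWu]; intro hc; linarith) (by rw [hWv]; exact hδ0.ne'),
      hWu, hWv, show (1 - δ) + δ = (1:ℝ) by ring, div_one]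
    congr 1
    · rw [show (T.toList.map fun a => ((1 - δ) * q a, φ a)) =
          ((T.toList.map fun a => (q a, φ a)).map fun e => ((1 - δ) * e.1, e.2)) by
            rw [List.map_map]; rfl,
        mixList_scale A (1 - δ) (by intro hc; linarith) _]
      rw [hy₀def, mixFam_eq A q φ hqfin hq0 hφ hqsum' T hqT]
    · rw [show (T.toList.map fun a => (δ * r a, φ a)) =
          ((T.toList.map fun a => (r a, φ a)).map fun e => (δ * e.1, e.2)) by
            rw [List.map_map]; rfl,
        mixList_scale A δ hδ0.ne' _]
      rw [hzeq]
  calc γ < A.op t y₀ 0 := htγ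
    _ = A.op (1 - δ) y₀ 0 := by rw [h1δ]
    _ ≤ A.op (1 - δ) y₀ (A.mixFam r φ) :=
        op_mono_right A hMO ⟨by linarith, by linarith⟩ hy₀
          ⟨le_refl 0, zero_le_one⟩ hz hz.1
    _ = A.mixFam p φ := key.symm


/-- Proposition 5.2: let `⟨[0,1], ⊕_p⟩` be a convex algebra satisfying (MO), (UC), (LC).
Then for every nonempty set `A` and every `φ : A → [0,1]`, the homomorphic extension
`φ# : 𝒟A → [0,1]`, `φ#((p_a)) = ⊕_{a} p_a φ(a)`, is lower semicontinuous with respect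
to the topology of pointwise convergence on `𝒟A`. -/
theorem stmt_19 {α : Type*} [Nonempty α] (A : UCA)
    (hMO : A.MO) (hUC : A.UC) (hLC : A.LC)
    (φ : α → ℝ) (hφ : ∀ a, φ a ∈ Set.Icc (0:ℝ) 1) :
    LowerSemicontinuousOn (fun p => A.mixFam p φ) (DSet α) :=
  stmt_19' A hMO hLC φ hφ
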